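/- For n ≥ 2 and even N with 2(n-1) ≤ N ≤ n(n-1), |H'(N,n)| = |H'((n+2)(n-1)-N,n)|, where H'(N,n) is the set of graphical partitions of N with exactly n positive parts and largest part exactly n-1. -/

import Mathlib

/-- A function `d : Fin n → ℕ` is graphic if it is the degree sequence of a
simple undirected graph on `n` vertices. -/
def Graphic (n : ℕ) (d : Fin n → ℕ) : Prop :=
  ∃ G : SimpleGraph (Fin n), ∀ v, (G.neighborSet v).ncard = d v

/-- Zero-free degree sequences of length `n` (non-increasing, positive, graphic). -/
def D (n : ℕ) : Set (Fin n → ℕ) :=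
  {d | Antitone d ∧ (∀ i, 0 < d i) ∧ Graphic n d}

/-- Degree sequences of length `n` allowing zero terms. -/
def D0 (n : ℕ) : Set (Fin n → ℕ) :=
  {d | Antitone d ∧ Graphic n d}
/-- Graphical partitions of N with exactly n (positive) parts, largest part exactly n-1. -/
def H' (N n : ℕ) : Set (Fin n → ℕ) :=
  {d | Antitone d ∧ (∀ i, 0 < d i) ∧ (∃ i, d i = n - 1) ∧ Graphic n d ∧ ∑ i, d i = N}

lemma ncard_nb {n : ℕ} (G : SimpleGraph (Fin n)) [DecidableRel G.Adj] (v : Fin n) :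
    (G.neighborSet v).ncard = G.degree v := by
  rw [Set.ncard_eq_toFinset_card']
  rfl

lemma graphic_le {n : ℕ} {d : Fin n → ℕ} (h : Graphic n d) (v : Fin n) : d v ≤ n - 1 := by
  classical
  obtain ⟨G, hG⟩ := h
  rw [← hG v, ncard_nb]
  have := SimpleGraph.degree_lt_card_verts (G := G) v
  simpa using Nat.le_sub_one_of_lt (by simpa using this)

lemma graphic_comp_perm {n : ℕ} {d : Fin n → ℕ} (π : Equiv.Perm (Fin n))
    (h : Graphic n d) : Graphic n (d ∘ π) := by
  obtain ⟨G, hG⟩ := h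
  refine ⟨⟨fun u v => G.Adj (π u) (π v), ⟨fun u v (h : G.Adj (π u) (π v)) => h.symm⟩, ⟨fun v (h : G.Adj (π v) (π v)) => G.irrefl h⟩⟩, ?_⟩
  intro v
  have h1 : (SimpleGraph.neighborSet ⟨fun u v => G.Adj (π u) (π v), ⟨fun u v (h : G.Adj (π u) (π v)) => h.symm⟩,
      ⟨fun v (h : G.Adj (π v) (π v)) => G.irrefl h⟩⟩ v) = π.symm '' (G.neighborSet (π v)) := by
    ext w
    simp only [SimpleGraph.neighborSet, Set.mem_setOf_eq, Set.mem_image]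
    constructor
    · intro hw; exact ⟨π w, hw, by simp⟩
    · rintro ⟨x, hx, rfl⟩; simpa using hx
  rw [h1, Set.ncard_image_of_injective _ π.symm.injective, hG]
  rfl

def sigmaFun (n : ℕ) : Fin n → Fin n := fun i =>
  if h : i.val = 0 then i else ⟨n - i.val, by have := i.isLt; omega⟩

lemma sigma_invol (n : ℕ) : Function.Involutive (sigmaFun n) := by
  intro i
  have hi := i.isLt
  unfold sigmaFun
  by_cases h : i.val = 0
  · simp [h]
  · rw [dif_neg h]
    have h2 : ¬ (n - i.val = 0) := by omega
    rw [dif_neg h2]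
    ext
    simp
    omega

lemma sigma_val {n : ℕ} (i : Fin n) (h : i.val ≠ 0) : (sigmaFun n i).val = n - i.val := by
  simp [sigmaFun, h]

def phiFun (n : ℕ) (d : Fin n → ℕ) : Fin n → ℕ := fun i =>
  if i.val = 0 then n - 1 else n - d (sigmaFun n i)

lemma phi_eq_comp (n : ℕ) (d : Fin n → ℕ) :
    phiFun n d = (fun i => if i.val = 0 then n - 1 else n - d i) ∘ (sigmaFun n) := by
  funext i
  by_cases h : i.val = 0
  · simp [phiFun, sigmaFun, h]
  · have h2 : (sigmaFun n i).val ≠ 0 := by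
      rw [sigma_val i h]; have := i.isLt; omega
    simp [phiFun, h, h2]

lemma graphic_flip {n : ℕ} (hn : 2 ≤ n) {d : Fin n → ℕ} (hd : Graphic n d)
    (h0 : d ⟨0, by omega⟩ = n - 1) :
    Graphic n (fun i => if i.val = 0 then n - 1 else n - d i) := by
  classical
  obtain ⟨G, hG⟩ := hd
  set i0 : Fin n := ⟨0, by omega⟩ with hi0
  have hdeg : ∀ v, G.degree v = d v := by
    intro v; rw [← hG v, ncard_nb]
  -- vertex i0 is adjacent to all others
  have hfull : ∀ v, v ≠ i0 → G.Adj i0 v := by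
    have hsub : G.neighborFinset i0 ⊆ {i0}ᶜ := by
      intro w hw
      simp only [Finset.mem_compl, Finset.mem_singleton]
      intro hc; subst hc
      rw [SimpleGraph.mem_neighborFinset] at hw
      exact G.irrefl hw
    have hcard : ({i0}ᶜ : Finset (Fin n)).card ≤ (G.neighborFinset i0).card := by
      rw [Finset.card_compl, SimpleGraph.card_neighborFinset_eq_degree, hdeg, h0]
      simp
    have heq := Finset.eq_of_subset_of_card_le hsub hcard
    intro v hv
    have : v ∈ G.neighborFinset i0 := by
      rw [heq]; simp [hv]
    simpa [SimpleGraph.mem_neighborFinset] using this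
  let G' : SimpleGraph (Fin n) :=
    { Adj := fun u v => u ≠ v ∧ (u = i0 ∨ v = i0 ∨ ¬ G.Adj u v)
      symm := by
        refine ⟨?_⟩
        rintro u v ⟨h1, h2⟩
        refine ⟨h1.symm, ?_⟩
        rcases h2 with h | h | h
        · exact Or.inr (Or.inl h)
        · exact Or.inl h
        · exact Or.inr (Or.inr fun hc => h hc.symm)
      loopless := ⟨fun v hv => hv.1 rfl⟩ }
  have hG'adj : ∀ u v, G'.Adj u v ↔ u ≠ v ∧ (u = i0 ∨ v = i0 ∨ ¬ G.Adj u v) := fun _ _ => Iff.rfl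
  refine ⟨G', ?_⟩
  intro v
  rw [ncard_nb]
  by_cases hv : v = i0
  · subst hv
    have hnb : G'.neighborFinset i0 = {i0}ᶜ := by
      ext w
      rw [SimpleGraph.mem_neighborFinset, Finset.mem_compl, Finset.mem_singleton, hG'adj]
      constructor
      · rintro ⟨h1, -⟩ hc
        exact h1 hc.symm
      · intro h
        exact ⟨fun hc => h hc.symm, Or.inl rfl⟩
    rw [SimpleGraph.degree, hnb, Finset.card_compl]
    simp [i0]
  · have hvne : v.val ≠ 0 := by
      intro hc; exact hv (Fin.ext hc)
    have hi0mem : i0 ∈ G.neighborFinset v := by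
      rw [SimpleGraph.mem_neighborFinset]
      exact (hfull v hv).symm
    have hnb : G'.neighborFinset v = ({v} ∪ (G.neighborFinset v).erase i0)ᶜ := by
      ext w
      simp only [SimpleGraph.mem_neighborFinset, hG'adj, Finset.mem_compl, Finset.mem_union,
        Finset.mem_singleton, Finset.mem_erase, SimpleGraph.mem_neighborFinset]
      constructor
      · rintro ⟨h1, h2⟩
        rcases h2 with h | h | h
        · exact absurd h hv
        · rintro (hc | ⟨hc, _⟩)
          · exact h1 hc.symm
          · exact hc h
        · rintro (hc | ⟨_, hc⟩)
          · exact h1 hc.symm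
          · exact h hc
      · intro h
        push_neg at h
        obtain ⟨h1, h2⟩ := h
        refine ⟨fun hc => h1 hc.symm, Or.inr ?_⟩
        by_cases hw : w = i0
        · exact Or.inl hw
        · exact Or.inr (h2 hw)
    rw [SimpleGraph.degree, hnb, Finset.card_compl, Finset.card_union_of_disjoint,
      Finset.card_singleton, Finset.card_erase_of_mem hi0mem,
      SimpleGraph.card_neighborFinset_eq_degree, hdeg]
    · have hd1 : 1 ≤ d v := by
        have := Finset.card_pos.mpr ⟨i0, hi0mem⟩
        rw [SimpleGraph.card_neighborFinset_eq_degree, hdeg] at this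
        omega
      have hdn : d v ≤ n - 1 := by
        have := SimpleGraph.degree_lt_card_verts (G := G) v
        rw [hdeg] at this
        simp at this
        omega
      simp only [if_neg hvne, Fintype.card_fin]
      omega
    · simp only [Finset.disjoint_singleton_left, Finset.mem_erase, SimpleGraph.mem_neighborFinset]
      rintro ⟨-, hc⟩
      exact G.irrefl hc

lemma d0_eq {n N : ℕ} (hn : 2 ≤ n) {d : Fin n → ℕ} (hd : d ∈ H' N n) :
    d ⟨0, by omega⟩ = n - 1 := by
  obtain ⟨hanti, hpos, ⟨i, hi⟩, hg, hsum⟩ := hd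
  have h1 : d i ≤ d ⟨0, by omega⟩ := hanti (by simp [Fin.le_def])
  have h2 := graphic_le hg ⟨0, by omega⟩
  omega

lemma mem_flip {n N : ℕ} (hn : 2 ≤ n) {d : Fin n → ℕ} (hd : d ∈ H' N n) :
    phiFun n d ∈ H' ((n + 2) * (n - 1) - N) n := by
  obtain ⟨hanti, hpos, hex, hg, hsum⟩ := hd
  have h0 := d0_eq hn ⟨hanti, hpos, hex, hg, hsum⟩
  have hle : ∀ i, d i ≤ n - 1 := graphic_le hg
  refine ⟨?_, ?_, ?_, ?_, ?_⟩
  · -- Antitone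
    intro i j hij
    have hij' : i.val ≤ j.val := hij
    by_cases hi : i.val = 0
    · by_cases hj : j.val = 0
      · simp [phiFun, hi, hj]
      · have : d (sigmaFun n j) ≥ 1 := hpos _
        simp only [phiFun, hi, hj, if_true, if_false]
        omega
    · have hj : j.val ≠ 0 := by omega
      have hs : sigmaFun n j ≤ sigmaFun n i := by
        rw [Fin.le_def, sigma_val i hi, sigma_val j hj]
        omega
      have := hanti hs
      simp only [phiFun, hi, hj, if_false]
      omega
  · -- positive
    intro i
    by_cases hi : i.val = 0
    · simp only [phiFun, hi, if_true]; omega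
    · have := hle (sigmaFun n i)
      simp only [phiFun, hi, if_false]
      omega
  · -- exists n-1
    refine ⟨⟨0, by omega⟩, ?_⟩
    simp [phiFun]
  · -- graphic
    rw [phi_eq_comp]
    exact graphic_comp_perm ((sigma_invol n).toPerm) (graphic_flip hn hg h0)
  · -- sum
    have hsum2 : ∑ i, phiFun n d i = ∑ i, (fun i => if i.val = 0 then n - 1 else n - d i) i := by
      rw [phi_eq_comp]
      exact Equiv.sum_comp ((sigma_invol n).toPerm)
        (fun i => if i.val = 0 then n - 1 else n - d i)
    have hkey : ∑ i, phiFun n d i + ∑ i, d i = (n + 2) * (n - 1) := by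
      rw [hsum2, ← Finset.sum_add_distrib]
      have hterm : ∀ i : Fin n,
          (if i.val = 0 then n - 1 else n - d i) + d i
            = (if i = (⟨0, by omega⟩ : Fin n) then 2 * (n - 1) else n) := by
        intro i
        by_cases hi : i.val = 0
        · have : i = (⟨0, by omega⟩ : Fin n) := Fin.ext hi
          rw [if_pos hi, if_pos this, this, h0]
          omega
        · have : ¬ (i = (⟨0, by omega⟩ : Fin n)) := fun hc => hi (by rw [hc])
          rw [if_neg hi, if_neg this]
          have := hle i
          omega
      rw [Finset.sum_congr rfl (fun i _ => hterm i)]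
      rw [← Finset.add_sum_erase _ _ (Finset.mem_univ (⟨0, by omega⟩ : Fin n)), if_pos rfl]
      have hrest : ∑ i ∈ Finset.univ.erase (⟨0, by omega⟩ : Fin n),
          (if i = (⟨0, by omega⟩ : Fin n) then 2 * (n - 1) else n)
          = (n - 1) * n := by
        rw [Finset.sum_congr rfl (fun i hi => if_neg (Finset.ne_of_mem_erase hi)),
          Finset.sum_const, smul_eq_mul, Finset.card_erase_of_mem (Finset.mem_univ _),
          Finset.card_univ, Fintype.card_fin]
      rw [hrest]
      obtain ⟨m, rfl⟩ : ∃ m, n = m + 2 := ⟨n - 2, by omega⟩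
      have hs : m + 2 - 1 = m + 1 := by omega
      rw [hs]
      ring
    have hNle : N ≤ (n + 2) * (n - 1) := by omega
    omega

lemma phi_invol {n N : ℕ} (hn : 2 ≤ n) {d : Fin n → ℕ} (hd : d ∈ H' N n) :
    phiFun n (phiFun n d) = d := by
  have h0 := d0_eq hn hd
  have hle : ∀ i, d i ≤ n - 1 := graphic_le hd.2.2.2.1
  funext i
  by_cases hi : i.val = 0
  · have he : i = (⟨0, by omega⟩ : Fin n) := Fin.ext hi
    rw [he, h0]
    simp [phiFun]
  · have hsi : (sigmaFun n i).val ≠ 0 := by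
      rw [sigma_val i hi]; have := i.isLt; omega
    simp only [phiFun, if_neg hi, if_neg hsi, sigma_invol n i]
    have := hle i
    omega

theorem H'_symmetry (n N : ℕ) (hn : 2 ≤ n) (hN : Even N)
    (h1 : 2 * (n - 1) ≤ N) (h2 : N ≤ n * (n - 1)) :
    (H' N n).ncard = (H' ((n + 2) * (n - 1) - N) n).ncard := by
  set M := (n + 2) * (n - 1) - N with hM
  have hexp : (n + 2) * (n - 1) = n * (n - 1) + 2 * (n - 1) := by ring
  have hMN : (n + 2) * (n - 1) - M = N := by omega
  have himg : phiFun n '' H' N n = H' M n := by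
    apply Set.Subset.antisymm
    · rintro _ ⟨d, hd, rfl⟩
      exact mem_flip hn hd
    · intro e he
      refine ⟨phiFun n e, ?_, phi_invol hn he⟩
      have := mem_flip hn he
      rwa [hMN] at this
  rw [← himg, Set.ncard_image_of_injOn]
  intro a ha b hb hab
  rw [← phi_invol hn ha, ← phi_invol hn hb, hab]
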